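/- In a commutative monoid, every rational subset is semilinear: it can be written as a finite union of sets of the form {x} · B*, where x is an element of the monoid and B is a finite subset. -/
import Mathlib

open scoped Pointwise

section Aux

open Submonoid

universe u
variable {M : Type u} [CommMonoid M]

lemma coe_closure_union (B C : Set M) :
    (closure (B ∪ C) : Set M) = (closure B : Set M) * (closure C : Set M) := by
  apply Set.Subset.antisymm
  · intro a ha
    induction ha using Submonoid.closure_induction with
    | mem b hb =>
      rcases hb with hb | hb
      · exact ⟨b, subset_closure hb, 1, one_mem _, mul_one b⟩
      · exact ⟨1, one_mem _, b, subset_closure hb, one_mul b⟩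
    | one => exact ⟨1, one_mem _, 1, one_mem _, one_mul 1⟩
    | mul x y hx hy ihx ihy =>
      obtain ⟨b1, hb1, c1, hc1, rfl⟩ := ihx
      obtain ⟨b2, hb2, c2, hc2, rfl⟩ := ihy
      exact ⟨b1 * b2, mul_mem hb1 hb2, c1 * c2, mul_mem hc1 hc2,
        (mul_mul_mul_comm b1 c1 b2 c2).symm⟩
  · rintro a ⟨b, hb, c, hc, rfl⟩
    exact mul_mem (Submonoid.closure_mono Set.subset_union_left hb)
      (Submonoid.closure_mono Set.subset_union_right hc)

/-- Semilinear sets with an arbitrary finite index type. -/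
def Semilinear (R : Set M) : Prop :=
  ∃ (ι : Type u) (_ : Fintype ι) (x : ι → M) (B : ι → Set M),
    (∀ i, (B i).Finite) ∧ R = ⋃ i, {x i} * (closure (B i) : Set M)

lemma semilinear_finite {U : Set M} (hU : U.Finite) : Semilinear U := by
  haveI := hU.fintype
  refine ⟨U, inferInstance, Subtype.val, fun _ => ∅, fun _ => Set.finite_empty, ?_⟩
  simp [Submonoid.closure_empty, Set.singleton_mul_singleton]

lemma semilinear_union {U V : Set M} (hU : Semilinear U) (hV : Semilinear V) :
    Semilinear (U ∪ V) := by
  obtain ⟨ι, _, x, B, hB, rfl⟩ := hU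
  obtain ⟨κ, _, y, C, hC, rfl⟩ := hV
  refine ⟨ι ⊕ κ, inferInstance, Sum.elim x y, Sum.elim B C, ?_, ?_⟩
  · rintro (i | j)
    · exact hB i
    · exact hC j
  · rw [Set.iUnion_sum]
    simp

lemma semilinear_mul {U V : Set M} (hU : Semilinear U) (hV : Semilinear V) :
    Semilinear (U * V) := by
  obtain ⟨ι, _, x, B, hB, rfl⟩ := hU
  obtain ⟨κ, _, y, C, hC, rfl⟩ := hV
  refine ⟨ι × κ, inferInstance, fun p => x p.1 * y p.2, fun p => B p.1 ∪ C p.2,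
    fun p => (hB p.1).union (hC p.2), ?_⟩
  rw [Set.iUnion_mul]
  simp_rw [Set.mul_iUnion, Set.iUnion_prod']
  refine Set.iUnion_congr fun i => Set.iUnion_congr fun j => ?_
  rw [mul_mul_mul_comm, Set.singleton_mul_singleton, coe_closure_union]

lemma semilinear_star {R : Set M} (hR : Semilinear R) :
    Semilinear (closure R : Set M) := by
  classical
  obtain ⟨ι, _, x, B, hB, rfl⟩ := hR
  set R : Set M := ⋃ i, {x i} * (closure (B i) : Set M) with hRdef
  refine ⟨Finset ι, inferInstance, fun S => ∏ i ∈ S, x i,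
    fun S => ⋃ i ∈ (S : Set ι), ({x i} ∪ B i), ?_, ?_⟩
  · intro S
    exact (S.finite_toSet.biUnion fun i _ => (Set.finite_singleton _).union (hB i))
  · have hxR : ∀ i, x i ∈ R := fun i => by
      refine Set.mem_iUnion.2 ⟨i, x i, rfl, 1, one_mem _, mul_one _⟩
    apply Set.Subset.antisymm
    · -- closure R ⊆ ⋃ S
      intro a ha
      induction ha using Submonoid.closure_induction with
      | mem a haR =>
        obtain ⟨i, y, rfl, g, hg, rfl⟩ := Set.mem_iUnion.1 haR
        refine Set.mem_iUnion.2 ⟨{i}, x i, ?_, g, ?_, rfl⟩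
        · simp
        · refine Submonoid.closure_mono ?_ hg
          intro b hb
          exact Set.mem_iUnion₂.2 ⟨i, by simp, Or.inr hb⟩
      | one =>
        exact Set.mem_iUnion.2 ⟨∅, 1, by simp, 1, one_mem _, mul_one 1⟩
      | mul a b _ _ iha ihb =>
        obtain ⟨S, y, rfl, g, hg, rfl⟩ := Set.mem_iUnion.1 iha
        obtain ⟨T, z, rfl, h, hh, rfl⟩ := Set.mem_iUnion.1 ihb
        refine Set.mem_iUnion.2 ⟨S ∪ T, _, rfl, (∏ i ∈ S ∩ T, x i) * g * h, ?_, ?_⟩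
        · have hST : ∀ U : Finset ι, U ⊆ S ∪ T →
              (closure (⋃ i ∈ (U : Set ι), ({x i} ∪ B i)) : Submonoid M) ≤
              closure (⋃ i ∈ ((S ∪ T : Finset ι) : Set ι), ({x i} ∪ B i)) := by
            intro U hU
            apply Submonoid.closure_mono
            exact Set.biUnion_subset_biUnion_left (by exact_mod_cast hU)
          refine mul_mem (mul_mem ?_ (hST S Finset.subset_union_left hg))
            (hST T Finset.subset_union_right hh)
          refine prod_mem fun i hi => subset_closure ?_
          refine Set.mem_iUnion₂.2 ⟨i, ?_, Or.inl rfl⟩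
          simp only [Finset.coe_union, Set.mem_union, Finset.mem_coe]
          exact Or.inl (Finset.mem_inter.1 hi).1
        · show (∏ i ∈ S ∪ T, x i) * ((∏ i ∈ S ∩ T, x i) * g * h)
            = ((∏ i ∈ S, x i) * g) * ((∏ i ∈ T, x i) * h)
          have hp := Finset.prod_union_inter (s₁ := S) (s₂ := T) (f := x)
          have hq : (∏ i ∈ S, x i) * g * ((∏ i ∈ T, x i) * h)
              = ((∏ i ∈ S, x i) * ∏ i ∈ T, x i) * (g * h) := by
            simp only [mul_comm, mul_assoc, mul_left_comm]
          rw [hq, ← hp]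
          simp only [mul_comm, mul_assoc, mul_left_comm]
    · -- ⋃ S ⊆ closure R
      intro a ha
      obtain ⟨S, y, rfl, g, hg, rfl⟩ := Set.mem_iUnion.1 ha
      have key : ∀ g ∈ closure (⋃ i ∈ (S : Set ι), ({x i} ∪ B i)),
          ∃ e ∈ closure R, ∃ c : ι → M, (∀ i ∈ S, c i ∈ closure (B i)) ∧
            g = e * ∏ i ∈ S, c i := by
        intro g hg
        induction hg using Submonoid.closure_induction with
        | mem b hb =>
          obtain ⟨i, hiS, hbi⟩ := Set.mem_iUnion₂.1 hb
          rcases hbi with hbi | hbi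
          · rcases Set.mem_singleton_iff.1 hbi with rfl
            exact ⟨x i, subset_closure (hxR i), fun _ => 1,
              fun _ _ => one_mem _, by simp⟩
          · refine ⟨1, one_mem _, fun j => if j = i then b else 1, ?_, ?_⟩
            · intro j hj
              by_cases hji : j = i
              · subst hji; simpa using subset_closure hbi
              · simp [hji, one_mem]
            · rw [one_mul, Finset.prod_ite_eq' S i (fun _ => b)]
              simp [Finset.mem_coe.1 hiS]
        | one =>
          exact ⟨1, one_mem _, fun _ => 1, fun _ _ => one_mem _, by simp⟩
        | mul p q hp hq ihp ihq =>
          obtain ⟨e1, he1, c1, hc1, rfl⟩ := ihp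
          obtain ⟨e2, he2, c2, hc2, rfl⟩ := ihq
          refine ⟨e1 * e2, mul_mem he1 he2, fun i => c1 i * c2 i,
            fun i hi => mul_mem (hc1 i hi) (hc2 i hi), ?_⟩
          rw [Finset.prod_mul_distrib]
          simp only [mul_comm, mul_assoc, mul_left_comm]
      obtain ⟨e, he, c, hc, rfl⟩ := key g hg
      show (∏ i ∈ S, x i) * (e * ∏ i ∈ S, c i) ∈ (closure R : Set M)
      have heq : (∏ i ∈ S, x i) * (e * ∏ i ∈ S, c i) = e * ∏ i ∈ S, (x i * c i) := by
        rw [Finset.prod_mul_distrib]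
        simp only [mul_comm, mul_assoc, mul_left_comm]
      rw [heq]
      refine mul_mem he (prod_mem fun i hi => subset_closure ?_)
      exact Set.mem_iUnion.2 ⟨i, x i, rfl, c i, hc i hi, rfl⟩

end Aux

/-- Rational subsets of a monoid. -/
inductive IsRational {M : Type*} [Monoid M] : Set M → Prop
  | finite (U : Set M) : U.Finite → IsRational U
  | union (U V : Set M) : IsRational U → IsRational V → IsRational (U ∪ V)
  | mul (U V : Set M) : IsRational U → IsRational V → IsRational (U * V)
  | star (U : Set M) : IsRational U → IsRational (Submonoid.closure U : Set M)

/-- in a commutative monoid, every rational subset is semilinear,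
i.e. a finite union of sets of the form `{x} · B*` with `B` finite. -/
theorem rational_is_semilinear {M : Type*} [CommMonoid M] (R : Set M)
    (hR : IsRational R) :
    ∃ (k : ℕ) (x : Fin k → M) (B : Fin k → Set M),
      (∀ i, (B i).Finite) ∧
      R = ⋃ i, {x i} * (Submonoid.closure (B i) : Set M) := by
  have hsl : Semilinear R := by
    induction hR with
    | finite U hU => exact semilinear_finite hU
    | union U V _ _ ihU ihV => exact semilinear_union ihU ihV
    | mul U V _ _ ihU ihV => exact semilinear_mul ihU ihV
    | star U _ ihU => exact semilinear_star ihU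
  obtain ⟨ι, _, x, B, hB, rfl⟩ := hsl
  refine ⟨Fintype.card ι, x ∘ (Fintype.equivFin ι).symm, B ∘ (Fintype.equivFin ι).symm,
    fun i => hB _, ?_⟩
  exact ((Fintype.equivFin ι).symm.surjective.iUnion_comp
    (fun i => {x i} * (Submonoid.closure (B i) : Set M))).symm
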